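/- Fix τ with Im τ > 0, n ∈ ℕ, c ∈ ℂ, and let Θ_{n,c}(Γ) be the space of entire functions f with f(z+1) = f(z) and f(z+τ) = (-1)ⁿ e^{-2πi(nz - c)} f(z). Then Θ_{n,c}(Γ) is an n-dimensional complex vector space. -/

import Mathlib

open Complex

/-- The space `Θ_{n,c}(Γ)` of entire functions with `f(z+1) = f(z)` and
`f(z+τ) = (-1)ⁿ e^{-2πi(nz-c)} f(z)`, as a subspace of `ℂ → ℂ`. -/
noncomputable def thetaSpace (τ c : ℂ) (n : ℕ) : Submodule ℂ (ℂ → ℂ) where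
  carrier := {f | Differentiable ℂ f ∧ (∀ z, f (z + 1) = f z) ∧
    ∀ z, f (z + τ) =
      (-1 : ℂ) ^ n * Complex.exp (-(2 * ↑Real.pi * I) * ((n : ℂ) * z - c)) * f z}
  add_mem' := by
    rintro f g ⟨hf1, hf2, hf3⟩ ⟨hg1, hg2, hg3⟩
    refine ⟨hf1.add hg1, fun z => ?_, fun z => ?_⟩
    · simp only [Pi.add_apply, hf2 z, hg2 z]
    · simp only [Pi.add_apply, hf3 z, hg3 z]; ring
  zero_mem' := by
    refine ⟨differentiable_const 0, fun z => rfl, fun z => ?_⟩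
    simp
  smul_mem' := by
    rintro a f ⟨h1, h2, h3⟩
    refine ⟨h1.const_smul a, fun z => ?_, fun z => ?_⟩
    · simp only [Pi.smul_apply, h2 z]
    · simp only [Pi.smul_apply, h3 z, smul_eq_mul]; ring

open Complex MeasureTheory Set

namespace ThetaDim

set_option maxHeartbeats 1000000

lemma continuous_deriv_of_entire {F : ℂ → ℂ} (hF : Differentiable ℂ F) :
    Continuous (deriv F) := by
  have h : AnalyticOnNhd ℂ F univ := analyticOnNhd_univ_iff_differentiable.mpr hF
  rw [← continuousOn_univ]
  exact h.deriv.continuousOn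

lemma cont_slide {F : ℂ → ℂ} (hF : Continuous F) (z : ℂ) :
    Continuous (fun a : ℝ => F (↑a + z)) :=
  hF.comp (Complex.continuous_ofReal.add continuous_const)

lemma hasDerivAt_slide {F : ℂ → ℂ} (hF : Differentiable ℂ F) (x : ℂ) (a : ℂ) :
    HasDerivAt (fun x => F (a + x)) (deriv F (a + x)) x := by
  simpa [Function.comp_def] using ((hF (a + x)).hasDerivAt.comp x (((hasDerivAt_id x).const_add a)))

lemma hasDerivAt_slide_real {F : ℂ → ℂ} (hF : Differentiable ℂ F) (z : ℂ) (t : ℝ) :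
    HasDerivAt (fun s : ℝ => F (↑s + z)) (deriv F (↑t + z)) t := by
  have h1 : HasDerivAt (fun w : ℂ => F (w + z)) (deriv F (↑t + z)) ↑t := by
    simpa [Function.comp_def] using ((hF (↑t + z)).hasDerivAt.comp (↑t : ℂ) ((hasDerivAt_id (↑t:ℂ)).add_const z))
  exact h1.comp_ofReal


lemma deriv_under_integral (G : ℂ → ℝ → ℂ) (G' : ℂ → ℝ → ℂ) (z₀ : ℂ) (C : ℝ)
    (hmes : ∀ᶠ x in nhds z₀, AEStronglyMeasurable (G x) (volume.restrict (Ioc (0:ℝ) 1)))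
    (hint : Integrable (G z₀) (volume.restrict (Ioc (0:ℝ) 1)))
    (hmes' : AEStronglyMeasurable (G' z₀) (volume.restrict (Ioc (0:ℝ) 1)))
    (hbd : ∀ᵐ (a : ℝ) ∂(volume.restrict (Ioc (0:ℝ) 1)), ∀ x ∈ Metric.ball z₀ 1, ‖G' x a‖ ≤ C)
    (hbint : Integrable (fun _ : ℝ => C) (volume.restrict (Ioc (0:ℝ) 1)))
    (hdiff : ∀ᵐ (a : ℝ) ∂(volume.restrict (Ioc (0:ℝ) 1)), ∀ x ∈ Metric.ball z₀ 1,
      HasDerivAt (fun x => G x a) (G' x a) x) :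
    HasDerivAt (fun x => ∫ a : ℝ, G x a ∂(volume.restrict (Ioc (0:ℝ) 1)))
      (∫ a : ℝ, G' z₀ a ∂(volume.restrict (Ioc (0:ℝ) 1))) z₀ :=
  (hasDerivAt_integral_of_dominated_loc_of_deriv_le (Metric.ball_mem_nhds z₀ one_pos) hmes hint hmes' hbd hbint hdiff).2

lemma integral_translate {F : ℂ → ℂ} (hF : Differentiable ℂ F)
    (hper : ∀ w, F (w + 1) = F w) (z : ℂ) :
    (∫ t in (0:ℝ)..1, F (t + z)) = ∫ t in (0:ℝ)..1, F t := by
  set μ : Measure ℝ := volume.restrict (Ioc (0:ℝ) 1) with hμ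
  set H : ℂ → ℂ := fun z => ∫ t : ℝ, F (↑t + z) ∂μ with hHdef
  have key : ∀ z₀ : ℂ, HasDerivAt H 0 z₀ := by
    intro z₀
    set G : ℂ → ℝ → ℂ := fun x a => F (↑a + x) with hG
    set G' : ℂ → ℝ → ℂ := fun x a => deriv F (↑a + x) with hG'
    obtain ⟨C, hC⟩ : ∃ C, ∀ w ∈ Metric.closedBall z₀ 3, ‖deriv F w‖ ≤ C :=
      (isCompact_closedBall z₀ 3).exists_bound_of_continuousOn
        (continuous_deriv_of_entire hF).continuousOn
    have hmes : ∀ᶠ x in nhds z₀, AEStronglyMeasurable (G x) μ :=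
      Filter.Eventually.of_forall fun x => (cont_slide hF.continuous x).aestronglyMeasurable
    have hmes' : AEStronglyMeasurable (G' z₀) μ :=
      (cont_slide (continuous_deriv_of_entire hF) z₀).aestronglyMeasurable
    have hint : Integrable (G z₀) μ :=
      (cont_slide hF.continuous z₀).integrableOn_Ioc
    have hbd : ∀ᵐ (a : ℝ) ∂μ, ∀ x ∈ Metric.ball z₀ 1, ‖G' x a‖ ≤ C := by
      rw [hμ]
      filter_upwards [ae_restrict_mem measurableSet_Ioc] with a ha x hx
      apply hC
      rw [Metric.mem_closedBall]
      have h1 : dist ((↑a : ℂ) + x) x ≤ 1 := by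
        rw [Complex.dist_eq]
        simp only [add_sub_cancel_right, Complex.norm_real, Real.norm_eq_abs]
        rw [_root_.abs_of_nonneg ha.1.le]; exact ha.2
      calc dist (↑a + x) z₀ ≤ dist ((↑a : ℂ) + x) x + dist x z₀ := dist_triangle _ _ _
        _ ≤ 1 + 1 := add_le_add h1 (le_of_lt (Metric.mem_ball.mp hx))
        _ ≤ 3 := by norm_num
    have hbint : Integrable (fun _ : ℝ => C) μ := by
      rw [hμ]
      exact (integrableOn_const_iff (C := C)).mpr (Or.inr (by simp [Real.volume_Ioc]))
    have hdiff : ∀ᵐ (a : ℝ) ∂μ, ∀ x ∈ Metric.ball z₀ 1,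
        HasDerivAt (fun x => G x a) (G' x a) x :=
      Filter.Eventually.of_forall fun a x _ => hasDerivAt_slide hF x ↑a
    have main : HasDerivAt (fun x => ∫ a : ℝ, G x a ∂μ) (∫ a : ℝ, G' z₀ a ∂μ) z₀ :=
      deriv_under_integral G G' z₀ C hmes hint hmes' hbd hbint hdiff
    have hzero : (∫ a : ℝ, G' z₀ a ∂μ) = 0 := by
      show (∫ a : ℝ, deriv F (↑a + z₀) ∂μ) = 0
      rw [hμ, ← intervalIntegral.integral_of_le zero_le_one]
      rw [intervalIntegral.integral_eq_sub_of_hasDerivAt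
        (fun t _ => hasDerivAt_slide_real hF z₀ t)
        ((cont_slide (continuous_deriv_of_entire hF) z₀).intervalIntegrable 0 1)]
      rw [Complex.ofReal_one, Complex.ofReal_zero, zero_add, add_comm, hper z₀, sub_self]
    rwa [hzero] at main
  have hd : Differentiable ℂ H := fun x => (key x).differentiableAt
  have hconst : H z = H 0 := by
    apply is_const_of_fderiv_eq_zero (𝕜 := ℂ) hd
    intro x
    have hd2 := (key x).hasFDerivAt.fderiv
    rw [hd2]
    ext y
    simp
  have e1 : (∫ t in (0:ℝ)..1, F (t + z)) = H z := by
    rw [hHdef, intervalIntegral.integral_of_le zero_le_one]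
  have e2 : (∫ t in (0:ℝ)..1, F t) = H 0 := by
    rw [hHdef, intervalIntegral.integral_of_le zero_le_one]
    simp only [add_zero]; rfl
  rw [e1, e2, hconst]



noncomputable def coeff (m : ℤ) (f : ℂ → ℂ) : ℂ :=
  ∫ t in (0:ℝ)..1, cexp (-(2 * ↑Real.pi * I) * m * t) * f t

section Recursion

variable {τ c : ℂ} {n : ℕ} {f : ℂ → ℂ}
variable (hf : Differentiable ℂ f) (h1 : ∀ z, f (z + 1) = f z)
  (h2 : ∀ z, f (z + τ) =
    (-1 : ℂ) ^ n * cexp (-(2 * ↑Real.pi * I) * ((n : ℂ) * z - c)) * f z)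

open Real in
include hf h1 h2 in
lemma coeff_step (m : ℤ) :
    coeff m f = (-1 : ℂ) ^ n * cexp ((2 * ↑π * I) * c - (2 * ↑π * I) * m * τ) *
      coeff (m + n) f := by
  set G : ℂ → ℂ := fun w => cexp (-(2 * ↑π * I) * m * w) * f w with hG
  have hGdiff : Differentiable ℂ G := by
    apply Differentiable.mul _ hf
    apply Differentiable.cexp
    exact (differentiable_const _).mul differentiable_id
  have hGper : ∀ w, G (w + 1) = G w := by
    intro w
    have e1 : cexp (-(2 * ↑π * I) * m * (w + 1)) =
        cexp (-(2 * ↑π * I) * m * w) * cexp ((-m : ℤ) * (2 * ↑π * I)) := by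
      rw [← Complex.exp_add]; congr 1; push_cast; ring
    simp only [hG, e1, Complex.exp_int_mul_two_pi_mul_I, mul_one, h1 w]
  have key := integral_translate hGdiff hGper τ
  have e2 : ∀ t : ℝ, G (↑t + τ) =
      ((-1 : ℂ) ^ n * cexp ((2 * ↑π * I) * c - (2 * ↑π * I) * m * τ)) *
        (cexp (-(2 * ↑π * I) * (((m + (n:ℤ) : ℤ)) : ℂ) * t) * f ↑t) := by
    intro t
    simp only [hG]
    rw [h2 (↑t : ℂ)]
    have lhs_eq : cexp (-(2 * (↑π:ℂ) * I) * ↑m * (↑t + τ)) *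
        ((-1 : ℂ) ^ n * cexp (-(2 * (↑π:ℂ) * I) * ((n : ℂ) * ↑t - c)) * f ↑t) =
        (-1 : ℂ) ^ n * cexp ((-(2 * (↑π:ℂ) * I) * ↑m * (↑t + τ)) +
          (-(2 * (↑π:ℂ) * I) * ((n : ℂ) * ↑t - c))) * f ↑t := by
      rw [Complex.exp_add]; ring
    have rhs_eq : ((-1 : ℂ) ^ n * cexp ((2 * (↑π:ℂ) * I) * c - (2 * ↑π * I) * m * τ)) *
        (cexp (-(2 * (↑π:ℂ) * I) * (((m + (n:ℤ) : ℤ)) : ℂ) * t) * f ↑t) =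
        (-1 : ℂ) ^ n * cexp (((2 * (↑π:ℂ) * I) * c - (2 * ↑π * I) * m * τ) +
          (-(2 * (↑π:ℂ) * I) * (((m + (n:ℤ) : ℤ)) : ℂ) * t)) * f ↑t := by
      rw [Complex.exp_add]; ring
    rw [lhs_eq, rhs_eq]
    have hexp : ((-(2 * (↑π:ℂ) * I) * ↑m * (↑t + τ)) +
        (-(2 * (↑π:ℂ) * I) * ((n : ℂ) * ↑t - c))) =
        (((2 * (↑π:ℂ) * I) * c - (2 * ↑π * I) * m * τ) +
          (-(2 * (↑π:ℂ) * I) * (((m + (n:ℤ) : ℤ)) : ℂ) * t)) := by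
      push_cast; ring
    rw [hexp]
  calc coeff m f = ∫ t in (0:ℝ)..1, G ↑t := rfl
    _ = ∫ t in (0:ℝ)..1, G (↑t + τ) := key.symm
    _ = ∫ t in (0:ℝ)..1, ((-1 : ℂ) ^ n * cexp ((2 * ↑π * I) * c - (2 * ↑π * I) * m * τ)) *
        (cexp (-(2 * ↑π * I) * (((m + (n:ℤ) : ℤ)) : ℂ) * t) * f ↑t) :=
        intervalIntegral.integral_congr (fun t _ => e2 t)
    _ = _ := by
        rw [intervalIntegral.integral_const_mul]
        rfl

include hf h1 h2 in
lemma coeff_iff (m : ℤ) : coeff m f = 0 ↔ coeff (m + n) f = 0 := by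
  have hK : ((-1 : ℂ) ^ n * cexp ((2 * ↑Real.pi * I) * c - (2 * ↑Real.pi * I) * m * τ)) ≠ 0 :=
    mul_ne_zero (pow_ne_zero _ (by norm_num)) (Complex.exp_ne_zero _)
  rw [coeff_step hf h1 h2 m, mul_eq_zero]
  simp [hK]

include hf h1 h2 in
lemma coeff_all_zero (hn : 0 < n)
    (hv : ∀ j : ℤ, 0 ≤ j → j < n → coeff j f = 0) (m : ℤ) : coeff m f = 0 := by
  have claim : ∀ k : ℤ, ∀ r : ℤ, 0 ≤ r → r < n → coeff (r + k * n) f = 0 := by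
    intro k
    induction k using Int.induction_on with
    | zero => intro r h0 h1'; simpa using hv r h0 h1'
    | succ i ih =>
        intro r h0 h1'
        have : (r + (i + 1) * n : ℤ) = (r + i * n) + n := by ring
        rw [this]
        exact (coeff_iff hf h1 h2 (r + i * n)).mp (ih r h0 h1')
    | pred i ih =>
        intro r h0 h1'
        apply (coeff_iff hf h1 h2 (r + (-(i:ℤ) - 1) * n)).mpr
        have : (r + (-(i:ℤ) - 1) * n + n : ℤ) = r + (-(i:ℤ)) * n := by ring
        rw [this]
        exact ih r h0 h1'
  have hn' : (n : ℤ) ≠ 0 := by exact_mod_cast hn.ne'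
  have hn0 : (0 : ℤ) < n := by exact_mod_cast hn
  have := claim (m / n) (m % n) (Int.emod_nonneg m hn') (Int.emod_lt_of_pos m hn0)
  rwa [show (m % n + m / n * n : ℤ) = m by rw [mul_comm]; exact Int.emod_add_mul_ediv m n] at this

end Recursion

section Uniqueness

lemma eq_zero_of_coeff_zero {f : ℂ → ℂ} (hf : Differentiable ℂ f)
    (h1 : ∀ z, f (z + 1) = f z) (hc : ∀ m : ℤ, coeff m f = 0) : f = 0 := by
  haveI : Fact (0 < (1:ℝ)) := ⟨one_pos⟩
  set g : AddCircle (1:ℝ) → ℂ := AddCircle.liftIco 1 0 (fun x : ℝ => f ↑x) with hg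
  have hg_eq : ∀ x : ℝ, x ∈ Icc (0:ℝ) 1 → g ↑x = f ↑x := by
    intro x hx
    rcases eq_or_lt_of_le hx.2 with h|h
    · subst h
      have e0 : ((1:ℝ) : AddCircle (1:ℝ)) = ((0:ℝ) : AddCircle (1:ℝ)) := by
        have : ((1:ℝ) : AddCircle (1:ℝ)) = 0 := by
          simpa using AddCircle.coe_period (p := (1:ℝ))
        rw [this]; norm_num
      rw [e0, hg]
      rw [AddCircle.liftIco_coe_apply (by norm_num : (0:ℝ) ∈ Ico (0:ℝ) (0+1))]
      push_cast
      have := h1 0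
      rw [zero_add] at this
      exact this.symm
    · exact AddCircle.liftIco_coe_apply (by simpa using ⟨hx.1, h⟩)
  have hfc : ∀ m : ℤ, fourierCoeff g m = 0 := by
    intro m
    rw [fourierCoeff_eq_intervalIntegral g m 0]
    have heq : ∀ x : ℝ, x ∈ uIcc (0:ℝ) (0+1) →
        (fourier (-m) (x : AddCircle (1:ℝ)) : ℂ) • g ↑x =
        cexp (-(2 * ↑Real.pi * I) * m * x) * f ↑x := by
      intro x hx
      rw [uIcc_of_le (by norm_num), zero_add] at hx
      rw [hg_eq x hx, fourier_coe_apply, smul_eq_mul]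
      congr 2
      push_cast
      ring
    rw [intervalIntegral.integral_congr heq]
    have := hc m
    rw [coeff] at this
    rw [zero_add, this, smul_zero]
  have hgc : Continuous g := by
    apply AddCircle.liftIco_continuous
    · show f ((0:ℝ):ℂ) = f (((0:ℝ) + 1 : ℝ):ℂ)
      push_cast
      simpa using (h1 0).symm
    · exact (hf.continuous.comp Complex.continuous_ofReal).continuousOn
  have hgzero : ∀ x : AddCircle (1:ℝ), g x = 0 := by
    intro x
    have hsum : Summable (fourierCoeff g) := by
      rw [funext hfc]; exact summable_zero
    have := has_pointwise_sum_fourier_series_of_summable (f := ⟨g, hgc⟩) ?_ x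
    · have h0 : (fun i : ℤ => fourierCoeff (⟨g, hgc⟩ : C(AddCircle (1:ℝ), ℂ)) i • fourier i x)
          = fun _ => (0:ℂ) := by
        funext i
        have : fourierCoeff ((⟨g, hgc⟩ : C(AddCircle (1:ℝ), ℂ)) : AddCircle (1:ℝ) → ℂ) i = 0 :=
          hfc i
        rw [show fourierCoeff (⇑(⟨g, hgc⟩ : C(AddCircle (1:ℝ), ℂ))) i = 0 from hfc i]
        simp
      rw [h0] at this
      exact (hasSum_zero.unique this).symm
    · show Summable (fourierCoeff (⇑(⟨g, hgc⟩ : C(AddCircle (1:ℝ), ℂ))))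
      exact hsum
  have hreal : ∀ x : ℝ, x ∈ Ico (0:ℝ) 1 → f ↑x = 0 := by
    intro x hx
    have : g ↑x = f ↑x := AddCircle.liftIco_coe_apply (by simpa using hx)
    rw [← this, hgzero]
  -- identity theorem
  have hfa : AnalyticOnNhd ℂ f univ := analyticOnNhd_univ_iff_differentiable.mpr hf
  have hfreq : ∃ᶠ z in nhdsWithin (0:ℂ) {(0:ℂ)}ᶜ, f z = 0 := by
    set u : ℕ → ℂ := fun k => ((1 / (k + 2) : ℝ) : ℂ) with hu
    have hr : ∀ k : ℕ, (1 / (k + 2) : ℝ) ∈ Ico (0:ℝ) 1 := by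
      intro k
      have hk2 : (0:ℝ) < (k:ℝ) + 2 := by positivity
      constructor
      · positivity
      · rw [div_lt_one hk2]
        have : (0:ℝ) ≤ (k:ℝ) := Nat.cast_nonneg k
        linarith
    have hne : ∀ k, u k ≠ 0 := by
      intro k
      simp only [hu]
      exact Complex.ofReal_ne_zero.mpr (by positivity)
    have htend0 : Filter.Tendsto (fun k : ℕ => (1 / (k + 2) : ℝ)) Filter.atTop (nhds 0) := by
      have := tendsto_one_div_add_atTop_nhds_zero_nat (𝕜 := ℝ)
      have h2' := this.comp (Filter.tendsto_add_atTop_nat 1)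
      convert h2' using 2 with k
      simp
      ring
    have htend : Filter.Tendsto u Filter.atTop (nhdsWithin (0:ℂ) {(0:ℂ)}ᶜ) := by
      apply tendsto_nhdsWithin_of_tendsto_nhds_of_eventually_within
      · have : Filter.Tendsto (fun x : ℝ => (x : ℂ)) (nhds 0) (nhds 0) := by
          simpa using Complex.continuous_ofReal.tendsto 0
        exact this.comp htend0
      · exact Filter.Eventually.of_forall fun k => hne k
    exact htend.frequently (Filter.Frequently.of_forall fun k => hreal _ (hr k))
  have := hfa.eqOn_zero_of_preconnected_of_frequently_eq_zero isPreconnected_univ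
    (mem_univ (0:ℂ)) hfreq
  funext z
  exact this (mem_univ z)

end Uniqueness



section Theta

open Real

/-- shift of the theta argument -/
noncomputable def beta (τ c : ℂ) (n : ℕ) (j : ℕ) : ℂ :=
  -c - (n:ℂ) * (τ + 1) / 2 + (j:ℂ) * τ

/-- the basis functions -/
noncomputable def theta (τ c : ℂ) (n : ℕ) (j : ℕ) : ℂ → ℂ := fun z =>
  cexp ((2 * ↑π * I) * (j:ℂ) * z) * jacobiTheta₂ ((n:ℂ) * z + beta τ c n j) ((n:ℂ) * τ)

variable {τ c : ℂ} {n : ℕ}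

lemma him (hτ : 0 < τ.im) (hn : 0 < n) : 0 < ((n:ℂ) * τ).im := by
  rw [Complex.mul_im]
  simp only [Complex.natCast_re, Complex.natCast_im, zero_mul, add_zero]
  positivity

lemma jacobiTheta₂_add_nat (w τ' : ℂ) (k : ℕ) :
    jacobiTheta₂ (w + (k:ℂ)) τ' = jacobiTheta₂ w τ' := by
  induction k with
  | zero => simp
  | succ i ih =>
      have : (w + ((i:ℂ) + 1)) = (w + (i:ℂ)) + 1 := by ring
      push_cast
      rw [this, jacobiTheta₂_add_left, ih]

lemma theta_differentiable (hτ : 0 < τ.im) (hn : 0 < n) (j : ℕ) :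
    Differentiable ℂ (theta τ c n j) := by
  apply Differentiable.mul
  · apply Differentiable.cexp
    exact (differentiable_const _).mul differentiable_id
  · intro z
    have h1 : DifferentiableAt ℂ (fun w => jacobiTheta₂ w ((n:ℂ) * τ))
        ((n:ℂ) * z + beta τ c n j) :=
      (hasDerivAt_jacobiTheta₂_fst _ (him hτ hn)).differentiableAt
    have h2 : DifferentiableAt ℂ (fun z : ℂ => (n:ℂ) * z + beta τ c n j) z := by
      fun_prop
    exact h1.comp z h2

lemma theta_periodic (j : ℕ) (z : ℂ) : theta τ c n j (z + 1) = theta τ c n j z := by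
  unfold theta
  have e1 : cexp ((2 * ↑π * I) * (j:ℂ) * (z + 1)) = cexp ((2 * ↑π * I) * (j:ℂ) * z) := by
    rw [show ((2 * (↑π:ℂ) * I) * (j:ℂ) * (z + 1)) =
      ((2 * ↑π * I) * (j:ℂ) * z) + ((j:ℤ):ℂ) * (2 * ↑π * I) by push_cast; ring]
    rw [Complex.exp_add, Complex.exp_int_mul_two_pi_mul_I, mul_one]
  have e2 : ((n:ℂ) * (z + 1) + beta τ c n j) = ((n:ℂ) * z + beta τ c n j) + (n:ℂ) := by ring
  rw [e1, e2, jacobiTheta₂_add_nat]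

lemma theta_quasi (hτ : 0 < τ.im) (hn : 0 < n) (j : ℕ) (z : ℂ) :
    theta τ c n j (z + τ) =
      (-1 : ℂ) ^ n * cexp (-(2 * ↑π * I) * ((n : ℂ) * z - c)) * theta τ c n j z := by
  unfold theta
  have e1 : ((n:ℂ) * (z + τ) + beta τ c n j) = ((n:ℂ) * z + beta τ c n j) + (n:ℂ) * τ := by
    ring
  rw [e1, jacobiTheta₂_add_left']
  have hpow : ((-1 : ℂ)) ^ n = cexp ((n:ℂ) * (↑π * I)) := by
    rw [Complex.exp_nat_mul, Complex.exp_pi_mul_I]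
  rw [hpow]
  have comb : cexp ((2 * ↑π * I) * (j:ℂ) * (z + τ)) *
      (cexp (-↑π * I * ((n:ℂ) * τ + 2 * ((n:ℂ) * z + beta τ c n j))) *
        jacobiTheta₂ ((n:ℂ) * z + beta τ c n j) ((n:ℂ) * τ)) =
      cexp ((2 * ↑π * I) * (j:ℂ) * (z + τ) + (-↑π * I * ((n:ℂ) * τ + 2 * ((n:ℂ) * z + beta τ c n j)))) *
        jacobiTheta₂ ((n:ℂ) * z + beta τ c n j) ((n:ℂ) * τ) := by
    rw [Complex.exp_add]; ring
  rw [comb]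
  have comb2 : cexp ((n:ℂ) * (↑π * I)) * cexp (-(2 * ↑π * I) * ((n : ℂ) * z - c)) *
      (cexp ((2 * ↑π * I) * (j:ℂ) * z) *
        jacobiTheta₂ ((n:ℂ) * z + beta τ c n j) ((n:ℂ) * τ)) =
      cexp ((n:ℂ) * (↑π * I) + (-(2 * ↑π * I) * ((n : ℂ) * z - c)) + (2 * ↑π * I) * (j:ℂ) * z) *
        jacobiTheta₂ ((n:ℂ) * z + beta τ c n j) ((n:ℂ) * τ) := by
    rw [Complex.exp_add, Complex.exp_add]; ring
  rw [comb2]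
  congr 1
  congr 1
  unfold beta
  ring



end Theta

section ExpInt
open Real

lemma norm_exp_two_pi_I_int (a : ℤ) (x : ℝ) :
    ‖cexp ((2 * ↑π * I) * (a:ℂ) * (x:ℂ))‖ = 1 := by
  rw [Complex.norm_exp]
  have : ((2 * (↑π:ℂ) * I) * (a:ℂ) * (x:ℂ)).re = 0 := by
    rw [show ((2 * (↑π:ℂ) * I) * (a:ℂ) * (x:ℂ)) = ((2 * π * a * x : ℝ) : ℂ) * I by
      push_cast; ring]
    simp [Complex.mul_I_re]
  rw [this, Real.exp_zero]

lemma integral_exp_int (ℓ : ℤ) :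
    (∫ t in (0:ℝ)..1, cexp ((2 * ↑π * I) * (ℓ:ℂ) * (t:ℂ))) =
      if ℓ = 0 then 1 else 0 := by
  rcases eq_or_ne ℓ 0 with h | h
  · subst h
    simp
  · rw [if_neg h]
    have hc : (2 * (↑π:ℂ) * I * (ℓ:ℂ)) ≠ 0 := by
      apply mul_ne_zero
      apply mul_ne_zero
      · simp [Real.pi_ne_zero]
      · exact Complex.I_ne_zero
      · exact_mod_cast h
    have : (∫ t in (0:ℝ)..1, cexp ((2 * (↑π:ℂ) * I * (ℓ:ℂ)) * (t:ℂ))) =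
        (cexp ((2 * ↑π * I * (ℓ:ℂ)) * 1) - cexp ((2 * ↑π * I * (ℓ:ℂ)) * 0)) /
          (2 * ↑π * I * (ℓ:ℂ)) := by
      exact_mod_cast integral_exp_mul_complex hc
    rw [show (∫ t in (0:ℝ)..1, cexp ((2 * (↑π:ℂ) * I) * (ℓ:ℂ) * (t:ℂ))) =
      ∫ t in (0:ℝ)..1, cexp ((2 * (↑π:ℂ) * I * (ℓ:ℂ)) * (t:ℂ)) by
        apply intervalIntegral.integral_congr; intro x _; ring_nf]
    rw [this]
    rw [show (2 * (↑π:ℂ) * I * (ℓ:ℂ)) * 1 = (ℓ:ℂ) * (2 * ↑π * I) by ring,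
      show (2 * (↑π:ℂ) * I * (ℓ:ℂ)) * 0 = 0 by ring,
      Complex.exp_int_mul_two_pi_mul_I, Complex.exp_zero, sub_self, zero_div]

end ExpInt

section CoeffTheta

open Real

variable {τ c : ℂ} {n : ℕ}

lemma coeff_theta (hτ : 0 < τ.im) (hn : 0 < n) (j : ℕ) (hj : j < n) (m : ℤ)
    (hm0 : 0 ≤ m) (hmn : m < n) :
    coeff m (theta τ c n j) = if m = (j:ℤ) then 1 else 0 := by
  set b : ℂ := beta τ c n j with hb
  set τ' : ℂ := (n:ℂ) * τ with hτ'
  have him' : 0 < τ'.im := him hτ hn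
  -- the term functions
  set E : ℤ → ℝ → ℂ := fun k t =>
    cexp ((2 * ↑π * I) * ((k * n + j - m : ℤ) : ℂ) * (t:ℂ)) * jacobiTheta₂_term k b τ' with hE
  -- pointwise sum
  have hpt : ∀ t : ℝ, HasSum (fun k : ℤ => E k t)
      (cexp (-(2 * ↑π * I) * (m:ℂ) * (t:ℂ)) * theta τ c n j t) := by
    intro t
    have h0 : HasSum (fun k : ℤ => jacobiTheta₂_term k ((n:ℂ) * t + b) τ')
        (jacobiTheta₂ ((n:ℂ) * t + b) τ') := hasSum_jacobiTheta₂_term _ him'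
    have h1 := h0.mul_left (cexp (-(2 * ↑π * I) * (m:ℂ) * (t:ℂ)) * cexp ((2 * ↑π * I) * (j:ℂ) * (t:ℂ)))
    have heq : (fun k : ℤ => (cexp (-(2 * ↑π * I) * (m:ℂ) * (t:ℂ)) * cexp ((2 * ↑π * I) * (j:ℂ) * (t:ℂ))) *
        jacobiTheta₂_term k ((n:ℂ) * t + b) τ') = fun k : ℤ => E k t := by
      funext k
      rw [hE]
      simp only []
      rw [jacobiTheta₂_term, jacobiTheta₂_term]
      rw [← Complex.exp_add, ← Complex.exp_add, ← Complex.exp_add]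
      congr 1
      push_cast
      ring
    rw [heq] at h1
    have : (cexp (-(2 * ↑π * I) * (m:ℂ) * (t:ℂ)) * cexp ((2 * ↑π * I) * (j:ℂ) * (t:ℂ))) *
        jacobiTheta₂ ((n:ℂ) * t + b) τ' = cexp (-(2 * ↑π * I) * (m:ℂ) * (t:ℂ)) * theta τ c n j t := by
      rw [theta]; ring
    rwa [this] at h1
  -- measurability and domination
  have hEcont : ∀ k : ℤ, Continuous (E k) := by
    intro k
    apply Continuous.mul _ continuous_const
    apply Continuous.cexp
    exact (continuous_const.mul Complex.continuous_ofReal)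
  have hnorm : ∀ k : ℤ, ∀ t : ℝ, ‖E k t‖ = ‖jacobiTheta₂_term k b τ'‖ := by
    intro k t
    rw [hE]
    simp only []
    rw [norm_mul, norm_exp_two_pi_I_int, one_mul]
  have hsummable : Summable (fun k : ℤ => ‖jacobiTheta₂_term k b τ'‖) :=
    summable_norm_iff.mpr ((summable_jacobiTheta₂_term_iff b τ').mpr him')
  set μ : MeasureTheory.Measure ℝ := MeasureTheory.volume.restrict (Ioc (0:ℝ) 1) with hμ
  have hμuniv : μ univ = 1 := by
    rw [hμ, MeasureTheory.Measure.restrict_apply_univ, Real.volume_Ioc]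
    norm_num
  have hlint : ∀ k : ℤ, (∫⁻ t : ℝ, ‖E k t‖₊ ∂μ) = (‖jacobiTheta₂_term k b τ'‖₊ : ENNReal) := by
    intro k
    have : (fun t : ℝ => (‖E k t‖₊ : ENNReal)) = fun _ => (‖jacobiTheta₂_term k b τ'‖₊ : ENNReal) := by
      funext t
      congr 1
      ext
      exact hnorm k t
    rw [this, MeasureTheory.lintegral_const, hμuniv, mul_one]
  have hswap : (∫ t : ℝ, (∑' k : ℤ, E k t) ∂μ) = ∑' k : ℤ, ∫ t : ℝ, E k t ∂μ := by
    apply MeasureTheory.integral_tsum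
    · exact fun k => (hEcont k).aestronglyMeasurable
    · change ∑' (i : ℤ), ∫⁻ (a : ℝ), (‖E i a‖₊ : ENNReal) ∂μ ≠ ⊤; rw [funext hlint]
      have h2 : Summable (fun k : ℤ => ‖jacobiTheta₂_term k b τ'‖₊) := by
        rw [← NNReal.summable_coe]
        simpa [coe_nnnorm] using hsummable
      exact ENNReal.tsum_coe_ne_top_iff_summable.mpr h2
  -- express coeff as the tsum
  have hcoeff : coeff m (theta τ c n j) = ∑' k : ℤ, ∫ t : ℝ, E k t ∂μ := by
    rw [coeff, intervalIntegral.integral_of_le (zero_le_one : (0:ℝ) ≤ 1)]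
    rw [← hswap]
    apply MeasureTheory.integral_congr_ae
    apply Filter.Eventually.of_forall
    intro t
    exact ((hpt t).tsum_eq).symm
  rw [hcoeff]
  -- evaluate each integral
  have hint : ∀ k : ℤ, (∫ t : ℝ, E k t ∂μ) =
      if (k * n + j - m : ℤ) = 0 then jacobiTheta₂_term k b τ' else 0 := by
    intro k
    rw [← intervalIntegral.integral_of_le (zero_le_one : (0:ℝ) ≤ 1)]
    have : (∫ t in (0:ℝ)..1, E k t) =
        (∫ t in (0:ℝ)..1, cexp ((2 * ↑π * I) * ((k * n + j - m : ℤ) : ℂ) * (t:ℂ))) *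
          jacobiTheta₂_term k b τ' := by
      rw [← intervalIntegral.integral_mul_const]
    rw [this, integral_exp_int]
    split_ifs with h
    · rw [one_mul]
    · rw [zero_mul]
  rw [funext hint]
  -- evaluate the tsum
  rcases eq_or_ne m (j:ℤ) with hmj | hmj
  · rw [if_pos hmj]
    subst hmj
    have hzero : ∀ k : ℤ, k ≠ 0 →
        (if (k * n + j - j : ℤ) = 0 then jacobiTheta₂_term k b τ' else 0) = 0 := by
      intro k hk
      rw [if_neg]
      intro hcon
      have : k * (n:ℤ) = 0 := by omega
      rcases mul_eq_zero.mp this with h | h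
      · exact hk h
      · exact absurd h (by exact_mod_cast hn.ne')
    rw [tsum_eq_single 0 hzero]
    rw [if_pos (by ring)]
    rw [jacobiTheta₂_term]
    norm_num
  · rw [if_neg hmj]
    have hzero : ∀ k : ℤ, (if (k * n + j - m : ℤ) = 0 then jacobiTheta₂_term k b τ' else 0) = 0 := by
      intro k
      rw [if_neg]
      intro hcon
      have hn' : (0:ℤ) < (n:ℤ) := by exact_mod_cast hn
      have hj' : (j:ℤ) < (n:ℤ) := by exact_mod_cast hj
      have hj0 : (0:ℤ) ≤ (j:ℤ) := Int.natCast_nonneg j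
      rcases lt_trichotomy k 0 with hk | hk | hk
      · nlinarith [Int.add_one_le_iff.mpr hk]
      · subst hk; omega
      · nlinarith [Int.add_one_le_iff.mpr hk]
    rw [funext hzero, tsum_zero]

end CoeffTheta



section Assemble

open Real

lemma cont_cexp_factor (m : ℤ) : Continuous (fun t : ℝ => cexp (-(2 * ↑π * I) * (m:ℂ) * (t:ℂ))) := by
  apply Continuous.cexp
  exact continuous_const.mul Complex.continuous_ofReal

lemma coeff_add {f g : ℂ → ℂ} (hf : Continuous f) (hg : Continuous g) (m : ℤ) :
    coeff m (f + g) = coeff m f + coeff m g := by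
  unfold coeff
  have i1 : IntervalIntegrable (fun t : ℝ => cexp (-(2 * ↑π * I) * (m:ℂ) * (t:ℂ)) * f ↑t)
      MeasureTheory.volume 0 1 :=
    ((cont_cexp_factor m).mul (hf.comp Complex.continuous_ofReal)).intervalIntegrable 0 1
  have i2 : IntervalIntegrable (fun t : ℝ => cexp (-(2 * ↑π * I) * (m:ℂ) * (t:ℂ)) * g ↑t)
      MeasureTheory.volume 0 1 :=
    ((cont_cexp_factor m).mul (hg.comp Complex.continuous_ofReal)).intervalIntegrable 0 1
  rw [← intervalIntegral.integral_add i1 i2]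
  apply intervalIntegral.integral_congr
  intro t _
  simp only [Pi.add_apply]
  ring

lemma coeff_smul (a : ℂ) (f : ℂ → ℂ) (m : ℤ) : coeff m (a • f) = a * coeff m f := by
  unfold coeff
  rw [← intervalIntegral.integral_const_mul]
  apply intervalIntegral.integral_congr
  intro t _
  simp only [Pi.smul_apply, smul_eq_mul]
  ring

end Assemble

end ThetaDim


open ThetaDim

/-- `Θ_{n,c}(Γ)` is an `n`-dimensional complex vector space. -/
theorem thetaSpace_finrank (τ : ℂ) (hτ : 0 < τ.im) (c : ℂ) (n : ℕ) (hn : 0 < n) :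
    Module.finrank ℂ (thetaSpace τ c n) = n := by
  classical
  set V := thetaSpace τ c n with hV
  have hmem : ∀ f : V, Differentiable ℂ (f : ℂ → ℂ) ∧ (∀ z, (f:ℂ→ℂ) (z + 1) = (f:ℂ→ℂ) z) ∧
      ∀ z, (f:ℂ→ℂ) (z + τ) =
        (-1 : ℂ) ^ n * Complex.exp (-(2 * ↑Real.pi * I) * ((n : ℂ) * z - c)) * (f:ℂ→ℂ) z :=
    fun f => f.2
  let Φ : V →ₗ[ℂ] (Fin n → ℂ) :=
  { toFun := fun f j => coeff ((j : ℕ) : ℤ) (f : ℂ → ℂ)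
    map_add' := by
      intro f g
      funext j
      exact coeff_add (hmem f).1.continuous (hmem g).1.continuous _
    map_smul' := by
      intro a f
      funext j
      exact coeff_smul a (f : ℂ → ℂ) _ }
  have hinj : Function.Injective Φ := by
    rw [injective_iff_map_eq_zero]
    intro f hf0
    obtain ⟨hd, hp, hq⟩ := hmem f
    have hall : ∀ m : ℤ, coeff m (f : ℂ → ℂ) = 0 := by
      apply coeff_all_zero hd hp hq hn
      intro j h0 h1
      have hjn : j.toNat < n := by omega
      have h2 : coeff ((((⟨j.toNat, hjn⟩ : Fin n) : ℕ)) : ℤ) (f : ℂ → ℂ) = 0 := by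
        exact congr_fun hf0 (⟨j.toNat, hjn⟩ : Fin n)
      have hcast : (((⟨j.toNat, hjn⟩ : Fin n) : ℕ) : ℤ) = j := by
        simp [Int.toNat_of_nonneg h0]
      rwa [hcast] at h2
    have hzero : (f : ℂ → ℂ) = 0 := eq_zero_of_coeff_zero hd hp hall
    exact Subtype.ext hzero
  have hsurj : Function.Surjective Φ := by
    intro v
    set Θ : Fin n → V := fun j =>
      ⟨theta τ c n j, theta_differentiable hτ hn j, theta_periodic j, theta_quasi hτ hn j⟩
      with hΘ
    have hΦΘ : ∀ j : Fin n, Φ (Θ j) = Pi.single j 1 := by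
      intro j
      funext m
      have hval : Φ (Θ j) m = coeff ((m : ℕ) : ℤ) (theta τ c n j) := rfl
      have hm0 : (0 : ℤ) ≤ ((m : ℕ) : ℤ) := Int.natCast_nonneg _
      have hmn : ((m : ℕ) : ℤ) < n := by exact_mod_cast m.isLt
      rw [hval, coeff_theta hτ hn j j.isLt _ hm0 hmn, Pi.single_apply]
      by_cases h : m = j
      · subst h
        rw [if_pos rfl, if_pos rfl]
      · rw [if_neg (fun hc => h (Fin.ext (by exact_mod_cast hc))), if_neg h]
    refine ⟨∑ j : Fin n, v j • Θ j, ?_⟩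
    rw [map_sum]
    simp_rw [LinearMap.map_smul, hΦΘ]
    funext m
    rw [Finset.sum_apply]
    have hsingle : ∀ j : Fin n, v j • (Pi.single j (1:ℂ) : Fin n → ℂ) =
        (Pi.single j (v j) : Fin n → ℂ) := by
      intro j
      rw [← Pi.single_smul, smul_eq_mul, mul_one]
    calc (∑ j : Fin n, (v j • (Pi.single j (1:ℂ) : Fin n → ℂ)) m)
        = ∑ j : Fin n, (Pi.single j (v j) : Fin n → ℂ) m := by
          refine Finset.sum_congr rfl fun j _ => ?_
          rw [hsingle j]
      _ = v m := by
          rw [← Finset.sum_apply]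
          rw [Finset.univ_sum_single]
  have e : V ≃ₗ[ℂ] (Fin n → ℂ) := LinearEquiv.ofBijective Φ ⟨hinj, hsurj⟩
  rw [e.finrank_eq, Module.finrank_fin_fun]
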